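/- Let p be an odd prime, let n ≥ 2 be an integer, and let G be a finite p-group of nilpotency class two with G' = Z(G) = Frat(G) (the Frattini subgroup), generated by elements x₁, …, x_n, such that G/G' is elementary abelian of order p^n with the images of x₁, …, x_n as an F_p-basis, and G' is elementary abelian of order p^{n(n−1)/2} with the commutators [x_j, x_k] (1 ≤ j < k ≤ n) as an F_p-basis. Let π: G/G' → G' be the homomorphism induced by x ↦ x^p. Let σ be an endomorphism of G' such that τ: z ↦ z·σ(z)² is an automorphism of G', and let ∘ be the operation x ∘ y = x·y·σ([x, y]). Let α be an automorphism of G/G' and suppose α̂ is an automorphism of G' satisfying α̂([x, y]) = [u, v] for all x, y, u, v ∈ G with uG' = α(xG') and vG' = α(yG'). Then the following are equivalent: (1) there exists a bijection θ: G → G with θ(x·y) = θ(x) ∘ θ(y) for all x, y ∈ G and θ(x)G' = α(xG') for all x ∈ G; (2) α̂(π(α⁻¹(w))) = τ⁻¹(π(w)) for all w ∈ G/G'. Moreover, in this case any such θ satisfies θ(z) = τ(α̂(z)) for all z ∈ G'. -/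

import Mathlib

/-- The commutator `[x, y] = x⁻¹ * y⁻¹ * x * y` in the paper's convention. -/
def pcomm {G : Type*} [Group G] (x y : G) : G := x⁻¹ * y⁻¹ * x * y

open scoped commutatorElement in
theorem pcomm_mem_commutator {G : Type*} [Group G] (x y : G) :
    pcomm x y ∈ commutator G := by
  have h : pcomm x y = ⁅x⁻¹, y⁻¹⁆ := by
    simp [pcomm, commutatorElement_def, mul_assoc]
  rw [h, commutator_def]
  exact Subgroup.commutator_mem_commutator (Subgroup.mem_top _) (Subgroup.mem_top _)

/-- A bilinear form on a group `G` of class two with `G' = Z(G)`: a map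
`Δ : G/G' × G/G' → G'` which is multiplicative in each variable. -/
def IsBilinearForm {G : Type*} [Group G] (Δ : G → G → G) : Prop :=
  (∀ x y : G, Δ x y ∈ commutator G) ∧
  (∀ x y w : G, w ∈ commutator G → Δ (x * w) y = Δ x y) ∧
  (∀ x y w : G, w ∈ commutator G → Δ x (y * w) = Δ x y) ∧
  (∀ x₁ x₂ y : G, Δ (x₁ * x₂) y = Δ x₁ y * Δ x₂ y) ∧
  (∀ x y₁ y₂ : G, Δ x (y₁ * y₂) = Δ x y₁ * Δ x y₂)

/-- The circle operation `x ∘ y = x·y·Δ(x, y)` associated to a bilinear form `Δ`. -/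
def circ {G : Type*} [Group G] (Δ : G → G → G) (x y : G) : G := x * y * Δ x y

/-- The circle inverse `x^{⊖1} = x⁻¹·Δ(x, x)`. -/
def oinv {G : Type*} [Group G] (Δ : G → G → G) (x : G) : G := x⁻¹ * Δ x x

/-- The circle commutator `[x, y]_∘ = x^{⊖1} ∘ y^{⊖1} ∘ x ∘ y`. -/
def ocomm {G : Type*} [Group G] (Δ : G → G → G) (x y : G) : G :=
  circ Δ (circ Δ (circ Δ (oinv Δ x) (oinv Δ y)) x) y

/-- The anti-symmetric bilinear form `Δ_σ(x, y) = σ([x, y])` associated to an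
endomorphism `σ` of `G'`. -/
def deltaSigma {G : Type*} [Group G] (σ : ↥(commutator G) →* ↥(commutator G))
    (x y : G) : G :=
  ↑(σ ⟨pcomm x y, pcomm_mem_commutator x y⟩)

section PcommLemmas
variable {H : Type*} [Group H]

@[simp] lemma pcomm_self (a : H) : pcomm a a = 1 := by simp [pcomm, mul_assoc]
@[simp] lemma pcomm_one_left (a : H) : pcomm 1 a = 1 := by simp [pcomm]
@[simp] lemma pcomm_one_right (a : H) : pcomm a 1 = 1 := by simp [pcomm]

lemma Commute.pcomm_eq_one {a b : H} (h : Commute a b) : pcomm a b = 1 := by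
  rw [pcomm, mul_assoc, h.eq]
  simp [mul_assoc]

lemma pcomm_inv_eq (a b : H) : (pcomm a b)⁻¹ = pcomm b a := by
  simp [pcomm, mul_assoc]

lemma mul_eq_mul_pcomm (a b : H) : a * b = b * a * pcomm a b := by
  simp only [pcomm]; group

lemma pcomm_mul_left {a c : H} (h : ∀ d, Commute (pcomm a c) d) (b : H) :
    pcomm (a * b) c = pcomm a c * pcomm b c := by
  have h1 : pcomm (a * b) c = b⁻¹ * (pcomm a c * b) * pcomm b c := by
    simp only [pcomm]; group
  rw [h1, (h b).eq]
  simp [mul_assoc]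

lemma pcomm_mul_right {a b : H} (h : ∀ d, Commute (pcomm a b) d) (c : H) :
    pcomm a (b * c) = pcomm a c * (c⁻¹ * (pcomm a b * c)) := by
  simp only [pcomm]; group

lemma pcomm_mul_right' {a b : H} (h : ∀ d, Commute (pcomm a b) d) (c : H) :
    pcomm a (b * c) = pcomm a b * pcomm a c := by
  rw [pcomm_mul_right h c, (h c).eq, inv_mul_cancel_left]
  exact ((h (pcomm a c)).eq).symm

lemma pcomm_inv_left {a c : H} (h : ∀ d, Commute (pcomm a c) d) :
    pcomm a⁻¹ c = (pcomm a c)⁻¹ := by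
  have h1 : pcomm a⁻¹ c = a * (pcomm a c)⁻¹ * a⁻¹ := by
    simp only [pcomm]; group
  rw [h1, mul_assoc, (h a⁻¹).inv_left.eq, ← mul_assoc]
  simp

lemma pcomm_inv_right {a c : H} (h : ∀ d, Commute (pcomm a c) d) :
    pcomm a c⁻¹ = (pcomm a c)⁻¹ := by
  have h1 : pcomm a c⁻¹ = c * (pcomm a c)⁻¹ * c⁻¹ := by
    simp only [pcomm]; group
  rw [h1, mul_assoc, (h c⁻¹).inv_left.eq, ← mul_assoc]
  simp

lemma pcomm_pow_left {a c : H} (h : ∀ d, Commute (pcomm a c) d) (m : ℕ) :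
    pcomm (a ^ m) c = pcomm a c ^ m := by
  induction m with
  | zero => simp
  | succ k ih =>
      rw [pow_succ, pcomm_mul_left (fun d => by rw [ih]; exact (h d).pow_left k), ih, pow_succ]

lemma pcomm_pow_right {a c : H} (h : ∀ d, Commute (pcomm a c) d) (m : ℕ) :
    pcomm a (c ^ m) = pcomm a c ^ m := by
  induction m with
  | zero => simp
  | succ k ih =>
      rw [pow_succ, pcomm_mul_right' (fun d => by rw [ih]; exact (h d).pow_left k), ih, pow_succ]

lemma pcomm_central_left {z : H} (h : ∀ d, Commute z d) (a : H) : pcomm z a = 1 :=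
  (h a).pcomm_eq_one

lemma pcomm_central_right {z : H} (h : ∀ d, Commute z d) (a : H) : pcomm a z = 1 :=
  ((h a).symm).pcomm_eq_one

lemma pcomm_mul_central_left {z a b : H} (h : ∀ d, Commute z d)
    (hc : ∀ d, Commute (pcomm a b) d) : pcomm (a * z) b = pcomm a b := by
  rw [pcomm_mul_left hc z, pcomm_central_left h, mul_one]

lemma pcomm_mul_central_right {z a b : H} (h : ∀ d, Commute z d)
    (hc : ∀ d, Commute (pcomm a b) d) : pcomm a (b * z) = pcomm a b := by
  rw [pcomm_mul_right' hc z, pcomm_central_right h, mul_one]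

end PcommLemmas

section WlPhi
variable {H : Type*} [Group H] {ι : Type*}

def Wl (u : ι → H) (a : ι → ℕ) : List ι → H
  | [] => 1
  | i :: l => u i ^ a i * Wl u a l

def Phi (pp : ℕ) (u : ι → H) (a b : ι → ℕ) : List ι → H
  | [] => 1
  | i :: l => Phi pp u a b l * (u i ^ pp) ^ ((a i + b i) / pp) *
      pcomm (Wl u a l) (u i) ^ b i

lemma Wl_eq_prod (u : ι → H) (a : ι → ℕ) (l : List ι) :
    Wl u a l = (l.map fun i => u i ^ a i).prod := by
  induction l with
  | nil => rfl
  | cons i l ih => simp [Wl, ih]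

lemma pcomm_Wl_central {u : ι → H} {a : ι → ℕ}
    (hc : ∀ i j : ι, ∀ c : H, Commute (pcomm (u i) (u j)) c) (i : ι) (l : List ι) :
    ∀ c, Commute (pcomm (Wl u a l) (u i)) c := by
  induction l with
  | nil => intro c; simp [Wl]
  | cons j l ih =>
      intro c
      have hji : ∀ d, Commute (pcomm (u j ^ a j) (u i)) d := by
        intro d
        rw [pcomm_pow_left (hc j i)]
        exact ((hc j i d).pow_left _)
      rw [Wl, pcomm_mul_left hji]
      exact (hji c).mul_left (ih c)

lemma Wl_mul_Wl {u : ι → H} {a b : ι → ℕ} (pp : ℕ)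
    (hc : ∀ i j : ι, ∀ c : H, Commute (pcomm (u i) (u j)) c)
    (hp : ∀ i : ι, ∀ c : H, Commute (u i ^ pp) c) :
    ∀ l : List ι, Wl u a l * Wl u b l =
      Wl u (fun i => (a i + b i) % pp) l * Phi pp u a b l := by
  intro l
  induction l with
  | nil => simp [Wl, Phi]
  | cons i l ih =>
      have hcen : ∀ c, Commute (pcomm (Wl u a l) (u i)) c := pcomm_Wl_central hc i l
      have hC : ∀ c, Commute (pcomm (Wl u a l) (u i) ^ b i) c := fun c => (hcen c).pow_left _
      have hK : ∀ c, Commute ((u i ^ pp) ^ ((a i + b i) / pp)) c := fun c => (hp i c).pow_left _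
      have e1 : Wl u a l * (u i ^ b i * Wl u b l) =
          u i ^ b i * (Wl u a l * Wl u b l) * pcomm (Wl u a l) (u i) ^ b i := by
        rw [← mul_assoc, mul_eq_mul_pcomm (Wl u a l) (u i ^ b i), pcomm_pow_right hcen,
          mul_assoc _ (pcomm (Wl u a l) (u i) ^ b i) (Wl u b l), (hC (Wl u b l)).eq,
          ← mul_assoc, mul_assoc (u i ^ b i)]
      have e2 : u i ^ (a i + b i) =
          u i ^ ((a i + b i) % pp) * (u i ^ pp) ^ ((a i + b i) / pp) := by
        rw [← pow_mul, ← pow_add, Nat.mod_add_div]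
      show u i ^ a i * Wl u a l * (u i ^ b i * Wl u b l) =
        u i ^ ((a i + b i) % pp) * Wl u (fun i => (a i + b i) % pp) l *
          (Phi pp u a b l * (u i ^ pp) ^ ((a i + b i) / pp) *
            pcomm (Wl u a l) (u i) ^ b i)
      calc u i ^ a i * Wl u a l * (u i ^ b i * Wl u b l)
          = u i ^ a i * (u i ^ b i * (Wl u a l * Wl u b l) *
              pcomm (Wl u a l) (u i) ^ b i) := by rw [mul_assoc, e1]
        _ = u i ^ a i * u i ^ b i * (Wl u a l * Wl u b l) *
              pcomm (Wl u a l) (u i) ^ b i := by rw [← mul_assoc, ← mul_assoc]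
        _ = u i ^ (a i + b i) * (Wl u (fun i => (a i + b i) % pp) l * Phi pp u a b l) *
              pcomm (Wl u a l) (u i) ^ b i := by rw [pow_add, ih]
        _ = u i ^ ((a i + b i) % pp) * (u i ^ pp) ^ ((a i + b i) / pp) *
              (Wl u (fun i => (a i + b i) % pp) l * Phi pp u a b l) *
              pcomm (Wl u a l) (u i) ^ b i := by rw [e2]
        _ = u i ^ ((a i + b i) % pp) *
              (Wl u (fun i => (a i + b i) % pp) l * Phi pp u a b l) *
              (u i ^ pp) ^ ((a i + b i) / pp) *
              pcomm (Wl u a l) (u i) ^ b i := by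
            rw [mul_assoc (u i ^ ((a i + b i) % pp)) ((u i ^ pp) ^ ((a i + b i) / pp)),
              (hK _).eq, ← mul_assoc]
        _ = u i ^ ((a i + b i) % pp) * Wl u (fun i => (a i + b i) % pp) l *
              (Phi pp u a b l * (u i ^ pp) ^ ((a i + b i) / pp) *
                pcomm (Wl u a l) (u i) ^ b i) := by simp only [mul_assoc]

end WlPhi

section DS
variable {G : Type*} [Group G]

lemma hc_of_hcen (hcen : ∀ z ∈ commutator G, ∀ c : G, z * c = c * z) :
    ∀ a b c : G, Commute (pcomm a b) c :=
  fun a b c => (hcen _ (pcomm_mem_commutator a b) c)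

lemma ds_mem (σ : ↥(commutator G) →* ↥(commutator G)) (a b : G) :
    deltaSigma σ a b ∈ commutator G := (σ _).2

lemma ds_central (σ : ↥(commutator G) →* ↥(commutator G))
    (hcen : ∀ z ∈ commutator G, ∀ c : G, z * c = c * z) (a b c : G) :
    Commute (deltaSigma σ a b) c := hcen _ (ds_mem σ a b) c

lemma ds_congr (σ : ↥(commutator G) →* ↥(commutator G)) {a b a' b' : G}
    (h : pcomm a b = pcomm a' b') : deltaSigma σ a b = deltaSigma σ a' b' :=
  congrArg (fun z => ((σ z : ↥(commutator G)) : G)) (Subtype.ext h)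

lemma ds_eq_one (σ : ↥(commutator G) →* ↥(commutator G)) {a b : G}
    (h : pcomm a b = 1) : deltaSigma σ a b = 1 := by
  unfold deltaSigma
  have : (⟨pcomm a b, pcomm_mem_commutator a b⟩ : ↥(commutator G)) = 1 :=
    Subtype.ext (by simpa using h)
  rw [this, map_one, OneMemClass.coe_one]

lemma ds_self (σ : ↥(commutator G) →* ↥(commutator G)) (a : G) :
    deltaSigma σ a a = 1 := ds_eq_one σ (pcomm_self a)

lemma ds_one_left (σ : ↥(commutator G) →* ↥(commutator G)) (a : G) :
    deltaSigma σ 1 a = 1 := ds_eq_one σ (pcomm_one_left a)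

lemma ds_one_right (σ : ↥(commutator G) →* ↥(commutator G)) (a : G) :
    deltaSigma σ a 1 = 1 := ds_eq_one σ (pcomm_one_right a)

lemma ds_mul_left (σ : ↥(commutator G) →* ↥(commutator G))
    (hcen : ∀ z ∈ commutator G, ∀ c : G, z * c = c * z) (a b c : G) :
    deltaSigma σ (a * b) c = deltaSigma σ a c * deltaSigma σ b c := by
  unfold deltaSigma
  rw [← Subgroup.coe_mul, ← map_mul]
  exact congrArg (fun z => ((σ z : ↥(commutator G)) : G))
    (Subtype.ext (pcomm_mul_left (hc_of_hcen hcen a c) b))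

lemma ds_mul_right (σ : ↥(commutator G) →* ↥(commutator G))
    (hcen : ∀ z ∈ commutator G, ∀ c : G, z * c = c * z) (a b c : G) :
    deltaSigma σ a (b * c) = deltaSigma σ a b * deltaSigma σ a c := by
  have h : pcomm a (b * c) = pcomm a b * pcomm a c :=
    pcomm_mul_right' (hc_of_hcen hcen a b) c
  unfold deltaSigma
  rw [← Subgroup.coe_mul, ← map_mul]
  exact congrArg (fun z => ((σ z : ↥(commutator G)) : G)) (Subtype.ext h)

lemma ds_central_arg_left (σ : ↥(commutator G) →* ↥(commutator G))
    (hcen : ∀ z ∈ commutator G, ∀ c : G, z * c = c * z) {z : G}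
    (hz : z ∈ commutator G) (a b : G) :
    deltaSigma σ (a * z) b = deltaSigma σ a b :=
  ds_congr σ (pcomm_mul_central_left (hcen z hz) (hc_of_hcen hcen a b))

lemma ds_central_arg_right (σ : ↥(commutator G) →* ↥(commutator G))
    (hcen : ∀ z ∈ commutator G, ∀ c : G, z * c = c * z) {z : G}
    (hz : z ∈ commutator G) (a b : G) :
    deltaSigma σ a (b * z) = deltaSigma σ a b :=
  ds_congr σ (pcomm_mul_central_right (hcen z hz) (hc_of_hcen hcen a b))

lemma circ_of_commute (σ : ↥(commutator G) →* ↥(commutator G)) {A B : G}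
    (h : Commute A B) : circ (deltaSigma σ) A B = A * B := by
  rw [circ, ds_eq_one σ h.pcomm_eq_one, mul_one]

lemma oinv_eq (σ : ↥(commutator G) →* ↥(commutator G)) (A : G) :
    oinv (deltaSigma σ) A = A⁻¹ := by rw [oinv, ds_self, mul_one]

end DS

section CircAxioms
variable {G : Type*} [Group G]

lemma circ_assoc (σ : ↥(commutator G) →* ↥(commutator G))
    (hcen : ∀ z ∈ commutator G, ∀ c : G, z * c = c * z) (A B C : G) :
    circ (deltaSigma σ) (circ (deltaSigma σ) A B) C =
      circ (deltaSigma σ) A (circ (deltaSigma σ) B C) := by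
  have hd : ∀ X Y c : G, Commute (deltaSigma σ X Y) c := ds_central σ hcen
  have lhs : circ (deltaSigma σ) (circ (deltaSigma σ) A B) C =
      A * B * C * (deltaSigma σ A B * (deltaSigma σ A C * deltaSigma σ B C)) := by
    show A * B * deltaSigma σ A B * C * deltaSigma σ (A * B * deltaSigma σ A B) C = _
    rw [ds_central_arg_left σ hcen (ds_mem σ A B), ds_mul_left σ hcen,
      mul_assoc (A * B) (deltaSigma σ A B) C, (hd A B C).eq,
      ← mul_assoc (A * B) C (deltaSigma σ A B)]
    simp only [mul_assoc]
  have rhs : circ (deltaSigma σ) A (circ (deltaSigma σ) B C) =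
      A * B * C * (deltaSigma σ B C * (deltaSigma σ A B * deltaSigma σ A C)) := by
    show A * (B * C * deltaSigma σ B C) * deltaSigma σ A (B * C * deltaSigma σ B C) = _
    rw [ds_central_arg_right σ hcen (ds_mem σ B C), ds_mul_right σ hcen]
    simp only [mul_assoc]
  rw [lhs, rhs]
  congr 1
  rw [(hd B C (deltaSigma σ A B * deltaSigma σ A C)).eq, mul_assoc]

lemma circ_one_left (σ : ↥(commutator G) →* ↥(commutator G)) (A : G) :
    circ (deltaSigma σ) 1 A = A := by
  rw [circ, ds_one_left, mul_one, one_mul]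

lemma circ_one_right (σ : ↥(commutator G) →* ↥(commutator G)) (A : G) :
    circ (deltaSigma σ) A 1 = A := by
  rw [circ, ds_one_right, mul_one, mul_one]

lemma circ_oinv_cancel (σ : ↥(commutator G) →* ↥(commutator G)) (A : G) :
    circ (deltaSigma σ) (oinv (deltaSigma σ) A) A = 1 := by
  rw [oinv_eq, circ_of_commute σ ((Commute.refl A).inv_left), inv_mul_cancel]

end CircAxioms

def CircT {G : Type*} (_Δ : G → G → G) : Type _ := G

def circGroup {G : Type*} [Group G] (σ : ↥(commutator G) →* ↥(commutator G))
    (hcen : ∀ z ∈ commutator G, ∀ c : G, z * c = c * z) :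
    Group (CircT (deltaSigma σ)) :=
  { mul := fun A B => (circ (deltaSigma σ) A B : G)
    one := (1 : G)
    inv := fun A => (oinv (deltaSigma σ) A : G)
    div := fun A B => (circ (deltaSigma σ) A (oinv (deltaSigma σ) B) : G)
    div_eq_mul_inv := fun _ _ => rfl
    mul_assoc := fun a b c => circ_assoc σ hcen a b c
    one_mul := fun a => circ_one_left σ a
    mul_one := fun a => circ_one_right σ a
    inv_mul_cancel := fun a => circ_oinv_cancel σ a }

lemma ocomm_eq_tau {G : Type*} [Group G] (σ : ↥(commutator G) →* ↥(commutator G))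
    (hcen : ∀ z ∈ commutator G, ∀ c : G, z * c = c * z)
    (τ : ↥(commutator G) ≃* ↥(commutator G)) (hτ : ∀ z, τ z = z * σ z ^ 2) (A B : G) :
    ocomm (deltaSigma σ) A B = ↑(τ ⟨pcomm A B, pcomm_mem_commutator A B⟩) := by
  have hc := hc_of_hcen hcen
  set z : ↥(commutator G) := ⟨pcomm A B, pcomm_mem_commutator A B⟩ with hz
  set c : G := ↑(σ z) with hcdef
  have hcc : ∀ d : G, Commute c d := fun d => hcen _ (σ z).2 d
  have hAinvA : pcomm A⁻¹ A = 1 := ((Commute.refl A).inv_left).pcomm_eq_one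
  have hBinvB : pcomm B⁻¹ B = 1 := ((Commute.refl B).inv_left).pcomm_eq_one
  have hBinvA : pcomm B⁻¹ A = pcomm A B := by
    rw [pcomm_inv_left (hc B A), pcomm_inv_eq]
  have step1 : circ (deltaSigma σ) (oinv (deltaSigma σ) A) (oinv (deltaSigma σ) B) =
      A⁻¹ * B⁻¹ * c := by
    rw [oinv_eq, oinv_eq, circ]
    congr 1
    refine ds_congr σ ?_
    rw [pcomm_inv_left (hc A B⁻¹), pcomm_inv_right (hc A B), inv_inv]
  have hds2 : deltaSigma σ (A⁻¹ * B⁻¹ * c) A = c := by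
    rw [ds_central_arg_left σ hcen (σ z).2]
    refine ds_congr σ ?_
    rw [pcomm_mul_left (hc A⁻¹ A) B⁻¹, hAinvA, one_mul, hBinvA]
  have step2 : circ (deltaSigma σ) (A⁻¹ * B⁻¹ * c) A = A⁻¹ * B⁻¹ * c * A * c := by
    rw [circ, hds2]
  have hds3 : deltaSigma σ (A⁻¹ * B⁻¹ * c * A * c) B = 1 := by
    rw [ds_central_arg_left σ hcen (σ z).2]
    refine ds_eq_one σ ?_
    rw [pcomm_mul_left (hc (A⁻¹ * B⁻¹ * c) B) A,
      pcomm_mul_central_left hcc (hc (A⁻¹ * B⁻¹) B),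
      pcomm_mul_left (hc A⁻¹ B) B⁻¹,
      pcomm_inv_left (hc A B), hBinvB]
    simp
  unfold ocomm
  rw [step1, step2, circ, hds3, mul_one, hτ z]
  rw [Subgroup.coe_mul, SubmonoidClass.coe_pow, sq]
  show A⁻¹ * B⁻¹ * c * A * c * B = pcomm A B * (c * c)
  rw [mul_assoc (A⁻¹ * B⁻¹) c A, (hcc A).eq, ← mul_assoc,
    mul_assoc (A⁻¹ * B⁻¹ * A * c) c B, (hcc B).eq, ← mul_assoc,
    mul_assoc (A⁻¹ * B⁻¹ * A) c B, (hcc B).eq, ← mul_assoc]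
  simp only [pcomm, mul_assoc]

def CircT.up {G : Type*} {Δ : G → G → G} (g : G) : CircT Δ := g
def CircT.down {G : Type*} {Δ : G → G → G} (A : CircT Δ) : G := A

@[simp] lemma CircT.down_up {G : Type*} {Δ : G → G → G} (g : G) :
    CircT.down (CircT.up (Δ := Δ) g) = g := rfl
@[simp] lemma CircT.up_down {G : Type*} {Δ : G → G → G} (A : CircT Δ) :
    CircT.up (CircT.down A) = A := rfl


/-- the linear criterion for the existence of an isomorphism
`θ : G → (G, ∘_σ)` inducing a prescribed automorphism `α` on `G/G'`. -/
theorem stmt_19 {p n : ℕ} (hp : p.Prime) (hodd : Odd p) (hn : 2 ≤ n)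
    {G : Type*} [Group G] [Fintype G] (hpG : IsPGroup p G)
    (hc2 : Subgroup.lowerCentralSeries (⊤ : Subgroup G) 2 = ⊥) (hc1 : Subgroup.lowerCentralSeries (⊤ : Subgroup G) 1 ≠ ⊥)
    (hGZ : commutator G = Subgroup.center G) (hGF : commutator G = frattini G)
    (x : Fin n → G) (hgen : Subgroup.closure (Set.range x) = ⊤)
    -- `G/G'` is elementary abelian of order `p^n`, with the images of the `xᵢ` as basis
    (hQcard : Nat.card (G ⧸ commutator G) = p ^ n)
    (hQexp : ∀ g : G, ((g : G ⧸ commutator G)) ^ p = 1)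
    (hQbasis : ∀ q : G ⧸ commutator G, ∃! e : Fin n → ZMod p,
      q = (((List.finRange n).map
        (fun i => ((x i : G ⧸ commutator G)) ^ (e i).val)).prod))
    -- `G'` is elementary abelian of order `p^{n(n-1)/2}`, with the `[x_j, x_k]` as basis
    (hDcard : Nat.card ↥(commutator G) = p ^ (n * (n - 1) / 2))
    (hDexp : ∀ g ∈ commutator G, g ^ p = 1)
    (hDbasis : ∀ g ∈ commutator G,
      ∃! e : {q : Fin n × Fin n // q.1 < q.2} → ZMod p,
        g = (((Finset.univ : Finset {q : Fin n × Fin n // q.1 < q.2}).toList.map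
          (fun q => (pcomm (x q.1.1) (x q.1.2)) ^ (e q).val)).prod))
    -- `π : G/G' → G'` is the homomorphism induced by `x ↦ x^p`
    (π : (G ⧸ commutator G) →* ↥(commutator G))
    (hπ : ∀ g : G, (π ((g : G ⧸ commutator G)) : G) = g ^ p)
    -- `σ` is an endomorphism of `G'` such that `τ : z ↦ z·σ(z)²` is an automorphism
    (σ : ↥(commutator G) →* ↥(commutator G))
    (τ : ↥(commutator G) ≃* ↥(commutator G)) (hτ : ∀ z, τ z = z * σ z ^ 2)
    -- `α` is an automorphism of `G/G'` and `α̂` the induced automorphism of `G'`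
    (α : (G ⧸ commutator G) ≃* (G ⧸ commutator G))
    (αhat : ↥(commutator G) ≃* ↥(commutator G))
    (hαhat : ∀ a b u v : G,
      ((u : G ⧸ commutator G)) = α ((a : G ⧸ commutator G)) →
      ((v : G ⧸ commutator G)) = α ((b : G ⧸ commutator G)) →
      αhat ⟨pcomm a b, pcomm_mem_commutator a b⟩ = ⟨pcomm u v, pcomm_mem_commutator u v⟩) :
    -- the two conditions are equivalent …
    ((∃ θ : G → G, Function.Bijective θ ∧
        (∀ a b : G, θ (a * b) = circ (deltaSigma σ) (θ a) (θ b)) ∧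
        (∀ a : G, ((θ a : G ⧸ commutator G)) = α ((a : G ⧸ commutator G)))) ↔
      (∀ w : G ⧸ commutator G, αhat (π (α.symm w)) = τ.symm (π w))) ∧
    -- … and any such `θ` acts on `G'` as `τ ∘ α̂`
    (∀ θ : G → G, Function.Bijective θ →
      (∀ a b : G, θ (a * b) = circ (deltaSigma σ) (θ a) (θ b)) →
      (∀ a : G, ((θ a : G ⧸ commutator G)) = α ((a : G ⧸ commutator G))) →
      ∀ z : ↥(commutator G), θ ↑z = ↑(τ (αhat z))) := by
  classical
  haveI : NeZero p := ⟨hp.ne_zero⟩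
  have hcen : ∀ z ∈ commutator G, ∀ c : G, z * c = c * z := by
    intro z hz c
    rw [hGZ] at hz
    exact (Subgroup.mem_center_iff.mp hz c).symm
  have hc : ∀ a b c : G, Commute (pcomm a b) c := hc_of_hcen hcen
  have hcenC : ∀ z ∈ commutator G, ∀ c : G, Commute z c := hcen
  -- Any multiplicative `θ` with the coset property preserves powers and acts as
  -- `τ ∘ αhat` on the commutator subgroup.
  have hlast : ∀ θ : G → G,
      (∀ a b : G, θ (a * b) = circ (deltaSigma σ) (θ a) (θ b)) →
      (∀ a : G, ((θ a : G ⧸ commutator G)) = α ((a : G ⧸ commutator G))) →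
      (∀ (a : G) (m : ℕ), θ (a ^ m) = θ a ^ m) ∧
        (∀ z : ↥(commutator G), θ ↑z = ↑(τ (αhat z))) := by
    intro θ hmul hcos
    have hθ1 : θ 1 = 1 := by
      have h := hmul 1 1
      rw [mul_one, circ, ds_self σ, mul_one] at h
      exact mul_eq_right.mp h.symm
    have hθpow : ∀ (a : G) (m : ℕ), θ (a ^ m) = θ a ^ m := by
      intro a m
      induction m with
      | zero => rw [pow_zero, pow_zero, hθ1]
      | succ k ih =>
          rw [pow_succ, hmul, ih, circ_of_commute σ (Commute.pow_self (θ a) k), pow_succ]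
    have hθinv : ∀ a : G, θ a⁻¹ = (θ a)⁻¹ := by
      intro a
      have hmem : θ a * θ a⁻¹ ∈ commutator G := by
        refine (QuotientGroup.eq_one_iff _).mp ?_
        rw [QuotientGroup.mk_mul, hcos a, hcos a⁻¹, ← map_mul, ← QuotientGroup.mk_mul,
          mul_inv_cancel, QuotientGroup.mk_one, map_one]
      have hds : deltaSigma σ (θ a) (θ a⁻¹) = 1 := by
        have hrw : θ a⁻¹ = (θ a)⁻¹ * (θ a * θ a⁻¹) := by group
        rw [hrw, ds_central_arg_right σ hcen hmem,
          ds_eq_one σ ((Commute.refl (θ a)).inv_right).pcomm_eq_one]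
      have h := hmul a a⁻¹
      rw [mul_inv_cancel, hθ1, circ, hds, mul_one] at h
      exact (mul_eq_one_iff_inv_eq.mp h.symm).symm
    have hθpc : ∀ a b : G,
        θ (pcomm a b) = ↑(τ (αhat ⟨pcomm a b, pcomm_mem_commutator a b⟩)) := by
      intro a b
      have h2 : ocomm (deltaSigma σ) (θ a) (θ b) =
          circ (deltaSigma σ) (circ (deltaSigma σ)
            (circ (deltaSigma σ) ((θ a)⁻¹) ((θ b)⁻¹)) (θ a)) (θ b) := by
        unfold ocomm
        rw [oinv_eq, oinv_eq]
      have h1 : θ (pcomm a b) = circ (deltaSigma σ) (circ (deltaSigma σ)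
          (circ (deltaSigma σ) ((θ a)⁻¹) ((θ b)⁻¹)) (θ a)) (θ b) := by
        show θ (a⁻¹ * b⁻¹ * a * b) = _
        rw [hmul, hmul, hmul, hθinv, hθinv]
      rw [h1, ← h2, ocomm_eq_tau σ hcen τ hτ, ← hαhat a b (θ a) (θ b) (hcos a) (hcos b)]
    have hθcmul : ∀ z t : G, z ∈ commutator G → θ (z * t) = θ z * θ t := by
      intro z t hz
      have hθz : θ z ∈ commutator G := by
        refine (QuotientGroup.eq_one_iff _).mp ?_
        rw [hcos z, (QuotientGroup.eq_one_iff z).mpr hz, map_one]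
      rw [hmul, circ, ds_eq_one σ (pcomm_central_left (fun d => hcen _ hθz d) _), mul_one]
    have hlist : ∀ L : List G,
        (∀ g ∈ L, ∃ w : ↥(commutator G), g = ↑w ∧ θ g = ↑(τ (αhat w))) →
        ∃ w : ↥(commutator G), L.prod = ↑w ∧ θ L.prod = ↑(τ (αhat w)) := by
      intro L
      induction L with
      | nil =>
          intro _
          refine ⟨1, by simp, ?_⟩
          rw [List.prod_nil, hθ1, map_one, map_one, OneMemClass.coe_one]
      | cons g L ih =>
          intro hmem
          obtain ⟨z0, hg0, hθ0⟩ := hmem g List.mem_cons_self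
          obtain ⟨z1, hL1, hθL1⟩ := ih (fun t ht => hmem t (List.mem_cons_of_mem g ht))
          refine ⟨z0 * z1, ?_, ?_⟩
          · rw [List.prod_cons, hg0, hL1, ← Subgroup.coe_mul]
          · rw [List.prod_cons, hθcmul g L.prod (hg0 ▸ z0.2), hθ0, hθL1,
              map_mul, map_mul, Subgroup.coe_mul]
    refine ⟨hθpow, ?_⟩
    intro z
    obtain ⟨e, he, -⟩ := hDbasis (z : G) z.2
    have hmem : ∀ g ∈ (Finset.univ : Finset {q : Fin n × Fin n // q.1 < q.2}).toList.map
        (fun q => (pcomm (x q.1.1) (x q.1.2)) ^ (e q).val),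
        ∃ w : ↥(commutator G), g = ↑w ∧ θ g = ↑(τ (αhat w)) := by
      intro g hg
      obtain ⟨q, -, rfl⟩ := List.mem_map.mp hg
      refine ⟨(⟨pcomm (x q.1.1) (x q.1.2),
        pcomm_mem_commutator _ _⟩ : ↥(commutator G)) ^ (e q).val, ?_, ?_⟩
      · rw [SubmonoidClass.coe_pow]
      · rw [hθpow, hθpc, map_pow, map_pow, SubmonoidClass.coe_pow]
    obtain ⟨z', hprod, hθ'⟩ := hlist _ hmem
    have hzz : z = z' := Subtype.ext (he.trans hprod)
    rw [he, hθ', ← hzz]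
  constructor
  · constructor
    · -- forward direction
      rintro ⟨θ, hbij, hmul, hcos⟩ w
      obtain ⟨hθpow, hθG'⟩ := hlast θ hmul hcos
      obtain ⟨g, hg⟩ := QuotientGroup.mk_surjective (α.symm w)
      have hgp : g ^ p ∈ commutator G := by rw [← hπ g]; exact (π _).2
      have h1 : θ (g ^ p) = ↑(τ (αhat ⟨g ^ p, hgp⟩)) := hθG' ⟨g ^ p, hgp⟩
      have h2 : θ (g ^ p) = ↑(π ((θ g : G ⧸ commutator G))) := by rw [hθpow, hπ]
      have h4 : (⟨g ^ p, hgp⟩ : ↥(commutator G)) = π ((g : G ⧸ commutator G)) :=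
        Subtype.ext (hπ g).symm
      have h5 : τ (αhat (π ((g : G ⧸ commutator G)))) = π (α ((g : G ⧸ commutator G))) := by
        have h6 := h1.symm.trans h2
        rw [h4, hcos g] at h6
        exact Subtype.coe_injective h6
      rw [hg, MulEquiv.apply_symm_apply] at h5
      have h7 := congrArg τ.symm h5
      rwa [MulEquiv.symm_apply_apply] at h7
    · -- backward direction
      intro hcond
      have hTπ : ∀ w : G ⧸ commutator G, τ (αhat (π w)) = π (α w) := by
        intro w
        have h := hcond (α w)
        rw [MulEquiv.symm_apply_apply] at h
        rw [h, MulEquiv.apply_symm_apply]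
      have hxp_mem : ∀ g : G, g ^ p ∈ commutator G := by
        intro g; rw [← hπ g]; exact (π _).2
      letI instC : Group (CircT (deltaSigma σ)) := circGroup σ hcen
      have h1 : ∀ A B : CircT (deltaSigma σ),
          A * B = CircT.up (circ (deltaSigma σ) (CircT.down A) (CircT.down B)) :=
        fun _ _ => rfl
      have h3 : (1 : CircT (deltaSigma σ)) = CircT.up 1 := rfl
      have h4 : ∀ A B : CircT (deltaSigma σ),
          pcomm A B = CircT.up (ocomm (deltaSigma σ) (CircT.down A) (CircT.down B)) :=
        fun _ _ => rfl
      have h5 : ∀ (A : CircT (deltaSigma σ)) (m : ℕ),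
          A ^ m = CircT.up ((CircT.down A) ^ m) := by
        intro A m
        induction m with
        | zero => rw [pow_zero, pow_zero]; exact h3
        | succ k ih =>
            rw [pow_succ, ih, h1, CircT.down_up,
              circ_of_commute σ (Commute.pow_self (CircT.down A) k), pow_succ]
      have h6 : ∀ z : G, (∀ c : G, Commute z c) → ∀ C : CircT (deltaSigma σ),
          Commute (CircT.up (Δ := deltaSigma σ) z) C := by
        intro z hz C
        have e : CircT.up (Δ := deltaSigma σ) z * C = C * CircT.up (Δ := deltaSigma σ) z := by
          rw [h1, h1, CircT.down_up, circ_of_commute σ (hz (CircT.down C)),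
            circ_of_commute σ ((hz (CircT.down C)).symm)]
          exact congrArg CircT.up (hz (CircT.down C)).eq
        exact e
      have hupmul : ∀ (u : G), (∀ c : G, Commute u c) → ∀ A : CircT (deltaSigma σ),
          A * CircT.up u = CircT.up (CircT.down A * u) := by
        intro u hu A
        rw [h1, CircT.down_up, circ_of_commute σ (hu (CircT.down A)).symm]
      choose y hy using fun i => QuotientGroup.mk_surjective (α ((x i : G ⧸ commutator G)))
      set yc : Fin n → CircT (deltaSigma σ) := fun i => CircT.up (y i) with hyc
      have hycd : ∀ i, CircT.down (yc i) = y i := fun i => rfl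
      set QW : (Fin n → ZMod p) → G ⧸ commutator G :=
        fun e => (((List.finRange n).map
          (fun i => ((x i : G ⧸ commutator G)) ^ (e i).val)).prod) with hQW
      choose E hE using fun g : G => (hQbasis ((g : G ⧸ commutator G))).exists
      have hEuniq : ∀ (g : G) (e : Fin n → ZMod p),
          ((g : G ⧸ commutator G)) = QW e → e = E g :=
        fun g e he => (hQbasis _).unique he (hE g)
      have hmkWl : ∀ (a : Fin n → ℕ) (l : List (Fin n)),
          ((Wl x a l : G) : G ⧸ commutator G) =
            (l.map (fun i => ((x i : G ⧸ commutator G)) ^ a i)).prod := by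
        intro a l
        induction l with
        | nil => simp [Wl]
        | cons i l ih =>
            simp only [Wl, List.map_cons, List.prod_cons, QuotientGroup.mk_mul]
            rw [ih]
            rfl
      have hGWQW : ∀ e : Fin n → ZMod p,
          ((Wl x (fun i => (e i).val) (List.finRange n) : G) : G ⧸ commutator G) = QW e := by
        intro e
        rw [hmkWl]
      have hmkcirc : ∀ u v : G, ((circ (deltaSigma σ) u v : G) : G ⧸ commutator G) =
          ((u : G ⧸ commutator G)) * ((v : G ⧸ commutator G)) := by
        intro u v
        rw [circ, QuotientGroup.mk_mul, QuotientGroup.mk_mul,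
          (QuotientGroup.eq_one_iff _).mpr (ds_mem σ u v), mul_one]
      have hmkWlC : ∀ (a : Fin n → ℕ) (l : List (Fin n)),
          ((CircT.down (Wl yc a l) : G) : G ⧸ commutator G) =
            (l.map (fun i => ((y i : G ⧸ commutator G)) ^ a i)).prod := by
        intro a l
        induction l with
        | nil =>
            have h0 : CircT.down (Wl yc a ([] : List (Fin n))) = (1 : G) := rfl
            rw [h0, List.map_nil, List.prod_nil, QuotientGroup.mk_one]
        | cons i l ih =>
            have hsplit : CircT.down (Wl yc a (i :: l)) =
                circ (deltaSigma σ) (y i ^ a i) (CircT.down (Wl yc a l)) := by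
              show CircT.down (yc i ^ a i * Wl yc a l) = _
              rw [h1, CircT.down_up, h5 (yc i) (a i), hycd i, CircT.down_up]
            rw [hsplit, hmkcirc, ih, List.map_cons, List.prod_cons]
            rfl
      have hcosWl : ∀ (a : Fin n → ℕ) (l : List (Fin n)),
          ((CircT.down (Wl yc a l) : G) : G ⧸ commutator G) =
            α (((Wl x a l : G) : G ⧸ commutator G)) := by
        intro a l
        rw [hmkWl, hmkWlC, map_list_prod, List.map_map]
        have hfg : ((fun i => ((y i : G ⧸ commutator G)) ^ a i) : Fin n → _) =
            (⇑α ∘ fun i => ((x i : G ⧸ commutator G)) ^ a i) := by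
          funext i
          show ((y i : G ⧸ commutator G)) ^ a i = α (((x i : G ⧸ commutator G)) ^ a i)
          rw [map_pow, hy i]
        rw [hfg]
      have hPhi : ∀ (a b : Fin n → ℕ) (l : List (Fin n)), ∃ z : ↥(commutator G),
          Phi p x a b l = ↑z ∧ CircT.down (Phi p yc a b l) = ↑(τ (αhat z)) := by
        intro a b l
        induction l with
        | nil =>
            refine ⟨1, by simp [Phi], ?_⟩
            have h0 : CircT.down (Phi p yc a b ([] : List (Fin n))) = (1 : G) := rfl
            rw [h0, map_one, map_one, OneMemClass.coe_one]
        | cons i l ih =>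
            obtain ⟨z, hzx, hzy⟩ := ih
            have hpc := hαhat (Wl x a l) (x i) (CircT.down (Wl yc a l)) (y i)
              (hcosWl a l) (hy i)
            have hoc : pcomm (Wl yc a l) (yc i) = CircT.up
                ((↑(τ (αhat ⟨pcomm (Wl x a l) (x i), pcomm_mem_commutator _ _⟩)) : G)) := by
              rw [h4, hycd, ocomm_eq_tau σ hcen τ hτ, hpc]
            have hyp : (y i : G) ^ p =
                (↑(τ (αhat (π ((x i : G ⧸ commutator G))))) : G) := by
              rw [← hπ (y i), hy i, ← hTπ]
            have hu1 : ∀ c : G, Commute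
                ((↑(τ (αhat (π ((x i : G ⧸ commutator G))))) : G) ^ ((a i + b i) / p)) c :=
              fun c => (hcenC _ (τ _).2 c).pow_left _
            have hu2 : ∀ c : G, Commute
                ((↑(τ (αhat ⟨pcomm (Wl x a l) (x i), pcomm_mem_commutator _ _⟩)) : G) ^ (b i)) c :=
              fun c => (hcenC _ (τ _).2 c).pow_left _
            refine ⟨z * (π ((x i : G ⧸ commutator G))) ^ ((a i + b i) / p) *
              (⟨pcomm (Wl x a l) (x i), pcomm_mem_commutator _ _⟩ :
                ↥(commutator G)) ^ (b i), ?_, ?_⟩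
            · show Phi p x a b l * (x i ^ p) ^ ((a i + b i) / p) *
                  pcomm (Wl x a l) (x i) ^ b i = _
              rw [hzx, ← hπ (x i)]
              simp only [Subgroup.coe_mul, SubmonoidClass.coe_pow]
            · show CircT.down (Phi p yc a b l * (yc i ^ p) ^ ((a i + b i) / p) *
                  pcomm (Wl yc a l) (yc i) ^ b i) = _
              simp only [hoc, h5, CircT.down_up, hycd, hyp]
              rw [hupmul _ hu1 (Phi p yc a b l), hupmul _ hu2, CircT.down_up,
                CircT.down_up, hzy]
              simp only [map_mul, map_pow, Subgroup.coe_mul, SubmonoidClass.coe_pow]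
      have hQcomm : ∀ u v : G ⧸ commutator G, u * v = v * u := by
        intro u v
        refine QuotientGroup.induction_on u fun a =>
          QuotientGroup.induction_on v fun b => ?_
        rw [← QuotientGroup.mk_mul, ← QuotientGroup.mk_mul, QuotientGroup.eq]
        have h : (a * b)⁻¹ * (b * a) = pcomm b a := by
          simp only [pcomm]; group
        rw [h]
        exact pcomm_mem_commutator b a
      have hprodmul : ∀ (l : List (Fin n)) (f g : Fin n → G ⧸ commutator G),
          (l.map f).prod * (l.map g).prod = (l.map (fun i => f i * g i)).prod := by
        intro l f g
        induction l with
        | nil => simp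
        | cons i l ih =>
            simp only [List.map_cons, List.prod_cons]
            calc f i * (l.map f).prod * (g i * (l.map g).prod)
                = f i * ((l.map f).prod * g i) * (l.map g).prod := by
                  simp only [mul_assoc]
              _ = f i * (g i * (l.map f).prod) * (l.map g).prod := by
                  rw [hQcomm ((l.map f).prod) (g i)]
              _ = f i * g i * ((l.map f).prod * (l.map g).prod) := by
                  simp only [mul_assoc]
              _ = f i * g i * (l.map (fun i => f i * g i)).prod := by rw [ih]
      have hQpowmod : ∀ (q : G ⧸ commutator G) (m : ℕ), q ^ p = 1 → q ^ m = q ^ (m % p) := by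
        intro q m hq
        conv_lhs => rw [← Nat.div_add_mod m p]
        rw [pow_add, pow_mul, hq, one_pow, one_mul]
      have hQWadd : ∀ e f : Fin n → ZMod p, QW e * QW f = QW (e + f) := by
        intro e f
        simp only [hQW]
        rw [hprodmul]
        have hfun : (fun i => ((x i : G ⧸ commutator G)) ^ (e i).val *
            ((x i : G ⧸ commutator G)) ^ (f i).val) =
            (fun i => ((x i : G ⧸ commutator G)) ^ ((e + f) i).val) := by
          funext i
          rw [← pow_add, Pi.add_apply, ZMod.val_add, ← hQpowmod _ _ (hQexp (x i))]
        rw [hfun]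
      have hEadd : ∀ g h : G, E (g * h) = E g + E h := by
        intro g h
        refine (hEuniq (g * h) (E g + E h) ?_).symm
        rw [QuotientGroup.mk_mul, hE g, hE h, hQWadd]
      have hav : ∀ g h : G, (fun i => ((E g i).val + (E h i).val) % p) =
          (fun i => (E (g * h) i).val) := by
        intro g h
        funext i
        rw [hEadd, Pi.add_apply, ZMod.val_add]
      have hdmem : ∀ g : G,
          (Wl x (fun i => (E g i).val) (List.finRange n))⁻¹ * g ∈ commutator G := by
        intro g
        rw [← QuotientGroup.eq, hGWQW]
        exact (hE g).symm
      set dd : G → ↥(commutator G) := fun g =>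
        ⟨(Wl x (fun i => (E g i).val) (List.finRange n))⁻¹ * g, hdmem g⟩ with hdd
      set ΘC : G → CircT (deltaSigma σ) := fun g =>
        Wl yc (fun i => (E g i).val) (List.finRange n) *
          CircT.up ((↑(τ (αhat (dd g))) : G)) with hΘC
      have hcY : ∀ (i j : Fin n) (c : CircT (deltaSigma σ)),
          Commute (pcomm (yc i) (yc j)) c := by
        intro i j c
        rw [h4, ocomm_eq_tau σ hcen τ hτ]
        exact h6 _ (fun d => hcen _ (τ _).2 d) c
      have hpY : ∀ (i : Fin n) (c : CircT (deltaSigma σ)), Commute (yc i ^ p) c := by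
        intro i c
        rw [h5, hycd]
        exact h6 _ (fun d => hcen _ (hxp_mem (y i)) d) c
      have hGkey := fun (a b : Fin n → ℕ) =>
        Wl_mul_Wl (u := x) (a := a) (b := b) p (fun i j c => hc _ _ c)
          (fun i c => hcen _ (hxp_mem (x i)) c) (List.finRange n)
      have hG2key := fun (a b : Fin n → ℕ) =>
        Wl_mul_Wl (u := yc) (a := a) (b := b) p hcY hpY (List.finRange n)
      have hmultC : ∀ g h : G, ΘC (g * h) = ΘC g * ΘC h := by
        intro g h
        obtain ⟨zφ, hzx, hzy⟩ := hPhi (fun i => (E g i).val) (fun i => (E h i).val)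
          (List.finRange n)
        have hkeyG : Wl x (fun i => (E (g * h) i).val) (List.finRange n) *
            (Phi p x (fun i => (E g i).val) (fun i => (E h i).val) (List.finRange n) *
              (((Wl x (fun i => (E g i).val) (List.finRange n))⁻¹ * g) *
               ((Wl x (fun i => (E h i).val) (List.finRange n))⁻¹ * h))) = g * h := by
          rw [← hav g h, ← mul_assoc,
            ← hGkey (fun i => (E g i).val) (fun i => (E h i).val)]
          have hDg : ∀ c : G,
              Commute ((Wl x (fun i => (E g i).val) (List.finRange n))⁻¹ * g) c :=
            fun c => hcen _ (hdmem g) c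
          calc Wl x (fun i => (E g i).val) (List.finRange n) *
                Wl x (fun i => (E h i).val) (List.finRange n) *
                (((Wl x (fun i => (E g i).val) (List.finRange n))⁻¹ * g) *
                 ((Wl x (fun i => (E h i).val) (List.finRange n))⁻¹ * h))
              = Wl x (fun i => (E g i).val) (List.finRange n) *
                (((Wl x (fun i => (E g i).val) (List.finRange n))⁻¹ * g) *
                  Wl x (fun i => (E h i).val) (List.finRange n)) *
                ((Wl x (fun i => (E h i).val) (List.finRange n))⁻¹ * h) := by
                rw [(hDg (Wl x (fun i => (E h i).val) (List.finRange n))).eq]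
                simp only [mul_assoc]
            _ = g * h := by group
        have hddmul : dd (g * h) = zφ * (dd g * dd h) := by
          refine Subtype.ext ?_
          show (Wl x (fun i => (E (g * h) i).val) (List.finRange n))⁻¹ * (g * h) = _
          generalize hA : Wl x (fun i => (E (g * h) i).val) (List.finRange n) = A
          rw [hA] at hkeyG
          rw [← hkeyG, inv_mul_cancel_left, hzx]
          simp only [Subgroup.coe_mul, hdd]
        have hcent_tg : ∀ C : CircT (deltaSigma σ),
            Commute (CircT.up (Δ := deltaSigma σ) ((↑(τ (αhat (dd g))) : G))) C :=
          fun C => h6 _ (fun c => hcen _ (τ _).2 c) C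
        have hth : ∀ c : G, Commute ((↑(τ (αhat (dd h))) : G)) c :=
          fun c => hcen _ (τ _).2 c
        have htgh : ∀ c : G,
            Commute ((↑(τ (αhat (dd g))) : G) * (↑(τ (αhat (dd h))) : G)) c :=
          fun c => (hcenC _ (τ _).2 c).mul_left (hcenC _ (τ _).2 c)
        simp only [hΘC]
        symm
        calc (Wl yc (fun i => (E g i).val) (List.finRange n) *
                CircT.up ((↑(τ (αhat (dd g))) : G))) *
             (Wl yc (fun i => (E h i).val) (List.finRange n) *
                CircT.up ((↑(τ (αhat (dd h))) : G)))
            = Wl yc (fun i => (E g i).val) (List.finRange n) *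
              (CircT.up ((↑(τ (αhat (dd g))) : G)) *
                Wl yc (fun i => (E h i).val) (List.finRange n)) *
              CircT.up ((↑(τ (αhat (dd h))) : G)) := by
              simp only [mul_assoc]
          _ = Wl yc (fun i => (E g i).val) (List.finRange n) *
              (Wl yc (fun i => (E h i).val) (List.finRange n) *
                CircT.up ((↑(τ (αhat (dd g))) : G))) *
              CircT.up ((↑(τ (αhat (dd h))) : G)) := by
              rw [(hcent_tg (Wl yc (fun i => (E h i).val) (List.finRange n))).eq]
          _ = (Wl yc (fun i => (E g i).val) (List.finRange n) *
                Wl yc (fun i => (E h i).val) (List.finRange n)) *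
              (CircT.up ((↑(τ (αhat (dd g))) : G)) *
                CircT.up ((↑(τ (αhat (dd h))) : G))) := by
              simp only [mul_assoc]
          _ = (Wl yc (fun i => ((E g i).val + (E h i).val) % p) (List.finRange n) *
                Phi p yc (fun i => (E g i).val) (fun i => (E h i).val) (List.finRange n)) *
              (CircT.up ((↑(τ (αhat (dd g))) : G)) *
                CircT.up ((↑(τ (αhat (dd h))) : G))) := by
              rw [hG2key (fun i => (E g i).val) (fun i => (E h i).val)]
          _ = Wl yc (fun i => (E (g * h) i).val) (List.finRange n) *
              (Phi p yc (fun i => (E g i).val) (fun i => (E h i).val) (List.finRange n) *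
                (CircT.up ((↑(τ (αhat (dd g))) : G)) *
                  CircT.up ((↑(τ (αhat (dd h))) : G)))) := by
              rw [hav g h]
              simp only [mul_assoc]
          _ = Wl yc (fun i => (E (g * h) i).val) (List.finRange n) *
              CircT.up ((↑(τ (αhat (dd (g * h)))) : G)) := by
              congr 1
              rw [hupmul _ hth, CircT.down_up, hupmul _ htgh, hzy, hddmul]
              simp only [map_mul, Subgroup.coe_mul]
      have hcosθ : ∀ g : G,
          ((CircT.down (ΘC g) : G) : G ⧸ commutator G) = α ((g : G ⧸ commutator G)) := by
        intro g
        simp only [hΘC]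
        rw [hupmul _ (fun c => hcen _ (τ _).2 c), CircT.down_up, QuotientGroup.mk_mul,
          (QuotientGroup.eq_one_iff _).mpr (τ (αhat (dd g))).2, mul_one, hcosWl, hGWQW]
        exact congrArg α ((hE g).symm)
      have hinj : Function.Injective (fun g : G => (CircT.down (ΘC g) : G)) := by
        intro g h hgh
        simp only at hgh
        have hQeq : ((g : G ⧸ commutator G)) = ((h : G ⧸ commutator G)) :=
          α.injective (by rw [← hcosθ g, ← hcosθ h, hgh])
        have hEeq : E g = E h := by
          refine hEuniq h (E g) ?_
          rw [← hQeq, hE g]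
        have hTC : ΘC g = ΘC h := by
          have h0 := congrArg (CircT.up (Δ := deltaSigma σ)) hgh
          rwa [CircT.up_down, CircT.up_down] at h0
        simp only [hΘC] at hTC
        have hM : Wl yc (fun i => (E g i).val) (List.finRange n) =
            Wl yc (fun i => (E h i).val) (List.finRange n) := by rw [hEeq]
        rw [hM] at hTC
        have h1' := mul_left_cancel hTC
        have h2' : (↑(τ (αhat (dd g))) : G) = ↑(τ (αhat (dd h))) :=
          congrArg CircT.down h1'
        have h3' : dd g = dd h := αhat.injective (τ.injective (Subtype.coe_injective h2'))
        have h4' : (Wl x (fun i => (E g i).val) (List.finRange n))⁻¹ * g =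
            (Wl x (fun i => (E h i).val) (List.finRange n))⁻¹ * h :=
          congrArg Subtype.val h3'
        rw [hEeq] at h4'
        exact mul_left_cancel h4'
      refine ⟨fun g => (CircT.down (ΘC g) : G), ?_, ?_, hcosθ⟩
      · exact Finite.injective_iff_bijective.mp hinj
      · intro a b
        show (CircT.down (ΘC (a * b)) : G) = _
        rw [hmultC a b, h1 (ΘC a) (ΘC b), CircT.down_up]
  · intro θ _ hm hc'
    exact (hlast θ hm hc').2
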